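/- Let G be a locally finite simple graph (every vertex has only finitely many neighbours) and let δ be a k-sparse distribution of G. Then G has a δ-flow f that is edge-bounded by k. -/

import Mathlib

set_option linter.unusedSectionVars false
set_option maxHeartbeats 1000000

open List in
lemma exists_nodup_chain_aux {α : Type*} (r : α → α → Prop) :
    ∀ (l : List α) (a : α), List.Chain r a l →
      ∃ l', List.Chain r a l' ∧ (a :: l').Nodup ∧
        (a :: l').getLast (List.cons_ne_nil _ _) = (a :: l).getLast (List.cons_ne_nil _ _) := by
  intro l
  induction l with
  | nil => intro a _; exact ⟨[], List.Chain.nil, List.nodup_singleton a, rfl⟩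
  | cons c t ih =>
    intro a hch
    rcases List.chain_cons.1 hch with ⟨hac, hct⟩
    obtain ⟨t', ht'c, ht'nd, ht'last⟩ := ih c hct
    by_cases ha : a ∈ c :: t'
    · obtain ⟨p, s, hps⟩ := List.append_of_mem ha
      refine ⟨s, ?_, ?_, ?_⟩
      · have : List.Chain' r (c :: t') := ht'c
        rw [hps] at this
        exact (this.suffix ⟨p, rfl⟩ : List.Chain' r (a :: s))
      · have : (c :: t').Nodup := ht'nd
        rw [hps] at this
        exact this.sublist (List.sublist_append_right p (a :: s))
      · rw [List.getLast_cons_cons, ← ht'last, List.getLast_congr _ _ hps,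
          List.getLast_append_right (l := p) (List.cons_ne_nil a s)]; simp
    · refine ⟨c :: t', List.chain_cons.2 ⟨hac, ht'c⟩, List.nodup_cons.2 ⟨ha, ht'nd⟩, ?_⟩
      rw [List.getLast_cons_cons, List.getLast_cons_cons, ht'last]

namespace SparseFlowAux

variable {V : Type*} [DecidableEq V]

def elem (a b : V) : V → V → ℤ := fun u w =>
  (if u = a ∧ w = b then 1 else 0) - (if u = b ∧ w = a then 1 else 0)

lemma elem_skew (a b u v : V) : elem a b u v = - elem a b v u := by
  unfold elem
  have e1 : (if v = a ∧ u = b then (1:ℤ) else 0) = (if u = b ∧ v = a then (1:ℤ) else 0) :=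
    if_congr and_comm rfl rfl
  have e2 : (if v = b ∧ u = a then (1:ℤ) else 0) = (if u = a ∧ v = b then (1:ℤ) else 0) :=
    if_congr and_comm rfl rfl
  rw [e1, e2]; ring

lemma elem_eq_zero {a b u v : V} (h : ¬(u = a ∧ v = b)) (h2 : ¬(u = b ∧ v = a)) :
    elem a b u v = 0 := by simp [elem, h, h2]

lemma elem_self (a b : V) (hne : a ≠ b) : elem a b a b = 1 := by
  have : ¬(a = b ∧ b = a) := fun h => hne h.1
  simp [elem, this]

lemma elem_self' (a b : V) (hne : a ≠ b) : elem a b b a = -1 := by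
  have : ¬(b = a ∧ a = b) := fun h => hne h.2
  simp [elem, this]

variable (G : SimpleGraph V)

section
variable (hlf : ∀ v : V, (G.neighborSet v).Finite)

noncomputable def dft (f : V → V → ℤ) (v : V) : ℤ := ∑ u ∈ (hlf v).toFinset, f v u

lemma mem_nbr {u v : V} : u ∈ (hlf v).toFinset ↔ G.Adj v u := by
  simp [Set.Finite.mem_toFinset]

lemma dft_elem (a b : V) (hab : G.Adj a b) (v : V) :
    dft G hlf (elem a b) v = (if v = a then 1 else 0) - (if v = b then 1 else 0) := by
  unfold dft elem
  rw [Finset.sum_sub_distrib]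
  congr 1
  · rcases eq_or_ne v a with rfl | hva
    · rw [Finset.sum_congr rfl (fun u _ => by simp : ∀ u ∈ (hlf v).toFinset,
        (if v = v ∧ u = b then (1:ℤ) else 0) = if u = b then 1 else 0)]
      rw [Finset.sum_ite_eq' _ b fun _ => (1:ℤ)]
      simp [mem_nbr G hlf, hab]
    · simp [hva]
  · rcases eq_or_ne v b with rfl | hvb
    · rw [Finset.sum_congr rfl (fun u _ => by simp : ∀ u ∈ (hlf v).toFinset,
        (if v = v ∧ u = a then (1:ℤ) else 0) = if u = a then 1 else 0)]
      rw [Finset.sum_ite_eq' _ a fun _ => (1:ℤ)]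
      simp [mem_nbr G hlf, hab.symm]
    · simp [hvb]

variable (k : ℕ) (W : Finset V) (f : V → V → ℤ)

/-- residual step relation -/
def Rstep (u w : V) : Prop := u ∈ W ∧ G.Adj u w ∧ f u w < (k : ℤ)

lemma pushl : ∀ (l : List V) (x : V) (g : V → V → ℤ),
    List.Chain (Rstep G k W f) x l → (x :: l).Nodup →
    (∀ u w, u ∈ x :: l → w ∈ x :: l → g u w = f u w) →
    (∀ u v, g u v = - g v u) → (∀ u v, g u v ≠ 0 → G.Adj u v) → (∀ u v, g u v ≤ (k:ℤ)) →
    ∃ g', (∀ u v, g' u v = - g' v u) ∧ (∀ u v, g' u v ≠ 0 → G.Adj u v) ∧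
      (∀ u v, g' u v ≤ (k:ℤ)) ∧
      ∀ v, dft G hlf g' v = dft G hlf g v + (if v = x then 1 else 0)
        - (if v = (x :: l).getLast (List.cons_ne_nil _ _) then 1 else 0) := by
  intro l
  induction l with
  | nil =>
    intro x g _ _ _ hsk hadj hbdd
    exact ⟨g, hsk, hadj, hbdd, fun v => by rw [List.getLast_singleton]; ring⟩
  | cons y l2 ih =>
    intro x g hch hnd hag hsk hadj hbdd
    rcases List.chain_cons.1 hch with ⟨hxy, hyl⟩
    obtain ⟨hxW, hxyadj, hxyk⟩ := hxy
    have hxny : x ≠ y := hxyadj.ne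
    have hxmem : x ∉ y :: l2 := (List.nodup_cons.1 hnd).1
    set g1 : V → V → ℤ := g + elem x y with hg1
    have hg1xy : g1 x y = g x y + 1 := by
      simp [hg1, elem_self x y hxny]
    have hg1yx : g1 y x = g y x - 1 := by
      simp [hg1, elem_self' x y hxny]; ring
    have hg1other : ∀ u w, ¬(u = x ∧ w = y) → ¬(u = y ∧ w = x) → g1 u w = g u w := by
      intro u w h1 h2; simp [hg1, elem_eq_zero h1 h2]
    have hsk1 : ∀ u v, g1 u v = - g1 v u := by
      intro u v; simp [hg1, hsk u v, elem_skew x y u v]; ring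
    have hadj1 : ∀ u v, g1 u v ≠ 0 → G.Adj u v := by
      intro u v h
      by_cases h1 : u = x ∧ v = y
      · obtain ⟨rfl, rfl⟩ := h1; exact hxyadj
      by_cases h2 : u = y ∧ v = x
      · obtain ⟨rfl, rfl⟩ := h2; exact hxyadj.symm
      · exact hadj u v (by rwa [hg1other u v h1 h2] at h)
    have hbdd1 : ∀ u v, g1 u v ≤ (k:ℤ) := by
      intro u v
      by_cases h1 : u = x ∧ v = y
      · obtain ⟨rfl, rfl⟩ := h1
        rw [hg1xy, hag u v (by simp) (by simp)]; omega
      by_cases h2 : u = y ∧ v = x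
      · obtain ⟨rfl, rfl⟩ := h2
        rw [hg1yx]; have := hbdd u v; omega
      · rw [hg1other u v h1 h2]; exact hbdd u v
    have hag1 : ∀ u w, u ∈ y :: l2 → w ∈ y :: l2 → g1 u w = f u w := by
      intro u w hu hw
      rw [hg1other u w (fun h => hxmem (h.1 ▸ hu)) (fun h => hxmem (h.2 ▸ hw))]
      exact hag u w (List.mem_cons_of_mem _ hu) (List.mem_cons_of_mem _ hw)
    obtain ⟨g', h1, h2, h3, h4⟩ :=
      ih y g1 hyl (List.nodup_cons.1 hnd).2 hag1 hsk1 hadj1 hbdd1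
    refine ⟨g', h1, h2, h3, fun v => ?_⟩
    have hdg1 : dft G hlf g1 v
        = dft G hlf g v + ((if v = x then 1 else 0) - (if v = y then 1 else 0)) := by
      have : dft G hlf g1 v = dft G hlf g v + dft G hlf (elem x y) v := by
        simp [hg1, dft, Finset.sum_add_distrib]
      rw [this, dft_elem G hlf x y hxyadj v]
    rw [h4 v, hdg1, List.getLast_cons_cons]
    ring

variable (δ : V → ℕ)

structure Good (W : Finset V) (f : V → V → ℤ) : Prop where
  skew : ∀ u v, f u v = - f v u
  adj : ∀ u v, f u v ≠ 0 → G.Adj u v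
  bdd : ∀ u v, f u v ≤ (k:ℤ)
  inv1 : ∀ v ∈ W, 1 ≤ δ v → dft G hlf f v ≤ (δ v:ℤ) - 1
  inv2 : ∀ v ∈ W, δ v = 0 → -1 ≤ dft G hlf f v ∧ dft G hlf f v ≤ 0

/-- the `ℕ`-valued consequence of `k`-sparseness -/
lemma sparse_nat
    (hsparse : ∀ Z : Finset V,
      (∑ v ∈ Z, (δ v : ℕ∞)) ≤ (Z.card : ℕ∞) +
        (k : ℕ∞) * {p : V × V | G.Adj p.1 p.2 ∧ p.1 ∉ Z ∧ p.2 ∈ Z}.encard)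
    (Z : Finset V) :
    (∑ v ∈ Z, δ v) ≤ Z.card + k * ∑ v ∈ Z, ((hlf v).toFinset \ Z).card := by
  classical
  set B : Finset (V × V) :=
    Z.biUnion (fun w => ((hlf w).toFinset \ Z).image (fun u => (u, w))) with hB
  have hset : {p : V × V | G.Adj p.1 p.2 ∧ p.1 ∉ Z ∧ p.2 ∈ Z} = (↑B : Set (V × V)) := by
    ext ⟨u, w⟩
    simp only [Set.mem_setOf_eq, hB, Finset.coe_biUnion, Set.mem_iUnion, Finset.mem_coe,
      Finset.mem_image, Finset.mem_sdiff, mem_nbr G hlf]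
    constructor
    · rintro ⟨hadj, hu, hw⟩
      exact ⟨w, hw, u, ⟨hadj.symm, hu⟩, rfl⟩
    · rintro ⟨w', hw', u', ⟨hadj, hu'⟩, heq⟩
      obtain ⟨rfl, rfl⟩ := Prod.ext_iff.mp heq.symm
      exact ⟨hadj.symm, hu', hw'⟩
  have hcard : B.card = ∑ v ∈ Z, ((hlf v).toFinset \ Z).card := by
    rw [hB, Finset.card_biUnion]
    · refine Finset.sum_congr rfl fun w _ => ?_
      exact Finset.card_image_of_injective _ (fun a b hab => (Prod.ext_iff.mp hab).1)
    · intro a _ b _ hab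
      simp only [Finset.disjoint_left, Finset.mem_image]
      rintro ⟨u, w⟩ ⟨u1, _, h1⟩ ⟨u2, _, h2⟩
      exact hab ((show a = w from (Prod.ext_iff.mp h1).2).trans
        ((show b = w from (Prod.ext_iff.mp h2).2)).symm)
  have h := hsparse Z
  rw [hset, Set.encard_coe_eq_coe_finsetCard, hcard] at h
  exact_mod_cast h


lemma augment (δ : V → ℕ)
    (hsp : ∀ Z : Finset V, (∑ v ∈ Z, δ v) ≤ Z.card + k * ∑ v ∈ Z, ((hlf v).toFinset \ Z).card)
    (hG : Good G hlf k δ W f) (v : V) (hv : v ∈ W)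
    (hlt : dft G hlf f v < (δ v : ℤ) - 1) :
    ∃ (f' : V → V → ℤ) (t : V),
      (∀ u v, f' u v = - f' v u) ∧ (∀ u v, f' u v ≠ 0 → G.Adj u v) ∧
      (∀ u v, f' u v ≤ (k:ℤ)) ∧ t ≠ v ∧
      (t ∉ W ∨ (δ t = 0 ∧ dft G hlf f t = 0)) ∧
      ∀ u, dft G hlf f' u = dft G hlf f u + (if u = v then 1 else 0)
        - (if u = t then 1 else 0) := by
  classical
  by_cases hex : ∃ t, Relation.ReflTransGen (Rstep G k W f) v t ∧
      (t ∉ W ∨ (δ t = 0 ∧ dft G hlf f t = 0))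
  · obtain ⟨t, hreach, hsink⟩ := hex
    obtain ⟨l, hch, hlast⟩ := List.exists_isChain_cons_of_relationReflTransGen hreach
    obtain ⟨l', hch', hnd', hlast'⟩ := exists_nodup_chain_aux _ l v hch
    obtain ⟨f', h1, h2, h3, h4⟩ :=
      pushl G hlf k W f l' v f hch' hnd' (fun _ _ _ _ => rfl) hG.skew hG.adj hG.bdd
    have hlt' : (v :: l').getLast (List.cons_ne_nil _ _) = t := hlast'.trans hlast
    have htv : t ≠ v := by
      rintro rfl
      rcases hsink with h | h
      · exact h hv
      · rw [h.2, h.1] at hlt; norm_num at hlt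
    exact ⟨f', t, h1, h2, h3, htv, hsink, fun u => by rw [h4 u, hlt']⟩
  · exfalso
    set R := Rstep G k W f with hR
    set Z : Finset V := W.filter (fun u => Relation.ReflTransGen R v u) with hZdef
    have hZ_iff : ∀ u, u ∈ Z ↔ Relation.ReflTransGen R v u := by
      intro u
      constructor
      · intro h; exact (Finset.mem_filter.1 h).2
      · intro h
        refine Finset.mem_filter.2 ⟨?_, h⟩
        by_contra hW
        exact hex ⟨u, h, Or.inl hW⟩
    have hvZ : v ∈ Z := (hZ_iff v).2 Relation.ReflTransGen.refl
    have hcut : ∀ u ∈ Z, ∀ w, G.Adj u w → w ∉ Z → f u w = (k:ℤ) := by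
      intro u hu w hadj hw
      rcases lt_or_ge (f u w) (k:ℤ) with h | h
      · have : Relation.ReflTransGen R v w :=
          ((hZ_iff u).1 hu).tail ⟨(Finset.mem_filter.1 hu).1, hadj, h⟩
        exact absurd ((hZ_iff w).2 this) hw
      · exact le_antisymm (hG.bdd u w) h
    have hdb : ∀ u ∈ Z, dft G hlf f u ≤ (δ u:ℤ) - 1 := by
      intro u hu
      have huW := (Finset.mem_filter.1 hu).1
      rcases Nat.eq_zero_or_pos (δ u) with h0 | h1
      · have hns : ¬(u ∉ W ∨ (δ u = 0 ∧ dft G hlf f u = 0)) :=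
          fun hs => hex ⟨u, (hZ_iff u).1 hu, hs⟩
        push_neg at hns
        have h2 := hG.inv2 u huW h0
        have hne := hns.2 h0
        rw [h0]; push_cast; omega
      · exact hG.inv1 u huW h1
    have hsum : ∑ u ∈ Z, dft G hlf f u
        = (k:ℤ) * ∑ u ∈ Z, ((((hlf u).toFinset \ Z).card : ℤ)) := by
      have hsplit : ∀ u ∈ Z, dft G hlf f u
          = (∑ w ∈ (hlf u).toFinset ∩ Z, f u w) + ∑ w ∈ (hlf u).toFinset \ Z, f u w :=
        fun u _ => (Finset.sum_inter_add_sum_sdiff _ _ _).symm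
      rw [Finset.sum_congr rfl hsplit, Finset.sum_add_distrib]
      have h1 : ∑ u ∈ Z, ∑ w ∈ (hlf u).toFinset ∩ Z, f u w = ∑ u ∈ Z, ∑ w ∈ Z, f u w := by
        refine Finset.sum_congr rfl fun u _ => Finset.sum_subset Finset.inter_subset_right ?_
        intro w hw hnw
        by_contra hne
        exact hnw (Finset.mem_inter.2 ⟨(mem_nbr G hlf).2 (hG.adj u w hne), hw⟩)
      have h2 : ∑ u ∈ Z, ∑ w ∈ Z, f u w = 0 := by
        have hc : ∑ u ∈ Z, ∑ w ∈ Z, f u w = ∑ w ∈ Z, ∑ u ∈ Z, f u w := Finset.sum_comm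
        have hneg : ∑ w ∈ Z, ∑ u ∈ Z, f u w = - ∑ w ∈ Z, ∑ u ∈ Z, f w u := by
          rw [← Finset.sum_neg_distrib]
          exact Finset.sum_congr rfl fun w _ => by
            rw [← Finset.sum_neg_distrib]
            exact Finset.sum_congr rfl fun u _ => hG.skew u w
        rw [hc] at *
        have : ∑ w ∈ Z, ∑ u ∈ Z, f w u = ∑ w ∈ Z, ∑ u ∈ Z, f u w := Finset.sum_comm
        omega
      have h3 : ∀ u ∈ Z, ∑ w ∈ (hlf u).toFinset \ Z, f u w
          = (k:ℤ) * (((hlf u).toFinset \ Z).card : ℤ) := by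
        intro u hu
        rw [Finset.sum_congr rfl (fun w hw => hcut u hu w
          ((mem_nbr G hlf).1 (Finset.mem_sdiff.1 hw).1) (Finset.mem_sdiff.1 hw).2)]
        simp [mul_comm]
      rw [h1, h2, Finset.sum_congr rfl h3, ← Finset.mul_sum]
      ring
    have hstrict : ∑ u ∈ Z, dft G hlf f u < ∑ u ∈ Z, ((δ u:ℤ) - 1) :=
      Finset.sum_lt_sum hdb ⟨v, hvZ, hlt⟩
    have hZc : (∑ u ∈ Z, (δ u:ℤ)) ≤ (Z.card:ℤ)
        + (k:ℤ) * ∑ u ∈ Z, ((((hlf u).toFinset \ Z).card : ℤ)) := by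
      exact_mod_cast hsp Z
    have hsplit2 : ∑ u ∈ Z, ((δ u:ℤ) - 1) = (∑ u ∈ Z, (δ u:ℤ)) - Z.card := by
      rw [Finset.sum_sub_distrib]; simp
    rw [hsum, hsplit2] at hstrict
    linarith

lemma finite_stage (δ : V → ℕ)
    (hsp : ∀ Z : Finset V, (∑ v ∈ Z, δ v) ≤ Z.card + k * ∑ v ∈ Z, ((hlf v).toFinset \ Z).card) :
    ∃ f : V → V → ℤ, Good G hlf k δ W f ∧
      ∀ v ∈ W, dft G hlf f v = (δ v:ℤ) - 1 ∨ (δ v = 0 ∧ dft G hlf f v = 0) := by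
  classical
  set Φ : (V → V → ℤ) → ℕ :=
    fun f => ∑ u ∈ W, ((δ u:ℤ) - 1 - dft G hlf f u).toNat with hΦ
  have done : ∀ f : V → V → ℤ, Good G hlf k δ W f →
      (∀ u ∈ W, ¬ dft G hlf f u < (δ u:ℤ) - 1) →
      ∀ v ∈ W, dft G hlf f v = (δ v:ℤ) - 1 ∨ (δ v = 0 ∧ dft G hlf f v = 0) := by
    intro f hG hnd v hv
    rcases Nat.eq_zero_or_pos (δ v) with h0 | h1
    · have h2 := hG.inv2 v hv h0
      have : dft G hlf f v = -1 ∨ dft G hlf f v = 0 := by omega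
      rcases this with h | h
      · left; rw [h, h0]; norm_num
      · right; exact ⟨h0, h⟩
    · left
      have := hG.inv1 v hv h1
      have := hnd v hv
      omega
  have key : ∀ (n : ℕ) (f : V → V → ℤ), Good G hlf k δ W f → Φ f ≤ n →
      ∃ f' : V → V → ℤ, Good G hlf k δ W f' ∧
        ∀ v ∈ W, dft G hlf f' v = (δ v:ℤ) - 1 ∨ (δ v = 0 ∧ dft G hlf f' v = 0) := by
    intro n
    induction n with
    | zero =>
      intro f hG hle
      refine ⟨f, hG, done f hG ?_⟩
      intro u hu hltu
      have hpos : 0 < Φ f :=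
        Finset.sum_pos' (fun _ _ => Nat.zero_le _) ⟨u, hu, by omega⟩
      omega
    | succ n ih =>
      intro f hG hle
      by_cases hdef : ∃ v ∈ W, dft G hlf f v < (δ v:ℤ) - 1
      · obtain ⟨v, hv, hlt⟩ := hdef
        obtain ⟨f', t, hsk, hadj, hbdd, htv, hsink, hd⟩ :=
          augment G hlf k W f δ hsp hG v hv hlt
        have htW : t ∈ W → (δ t = 0 ∧ dft G hlf f t = 0) := by
          intro htW'
          rcases hsink with h | h
          · exact absurd htW' h
          · exact h
        have hG' : Good G hlf k δ W f' := by
          refine ⟨hsk, hadj, hbdd, ?_, ?_⟩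
          · intro u hu h1
            rw [hd u]
            rcases eq_or_ne u v with rfl | huv
            · simp [htv.symm]
              omega
            · simp [huv]
              rcases eq_or_ne u t with rfl | hut
              · simp
                have := hG.inv1 u hu h1
                omega
              · simp [hut]
                have := hG.inv1 u hu h1
                omega
          · intro u hu h0
            have huv : u ≠ v := by
              rintro rfl
              have := hG.inv2 u hu h0
              rw [h0] at hlt
              push_cast at hlt
              omega
            rw [hd u]
            simp [huv]
            rcases eq_or_ne u t with rfl | hut
            · simp
              have := (htW hu).2
              omega
            · simp [hut]
              have := hG.inv2 u hu h0
              omega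
        have hΦlt : Φ f' < Φ f := by
          refine Finset.sum_lt_sum ?_ ⟨v, hv, ?_⟩
          · intro u hu
            rw [hd u]
            rcases eq_or_ne u v with rfl | huv
            · simp [htv.symm]; omega
            · simp [huv]
              rcases eq_or_ne u t with rfl | hut
              · simp
                have h00 := htW hu
                rw [h00.1, h00.2]
                norm_num
              · simp [hut]
          · rw [hd v]
            simp [htv.symm]
            omega
        exact ih f' hG' (by omega)
      · push_neg at hdef
        exact ⟨f, hG, done f hG (fun u hu => not_lt.2 (hdef u hu))⟩
  refine key (Φ 0) 0 ⟨?_, ?_, ?_, ?_, ?_⟩ le_rfl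
  · intro u v; simp
  · intro u v h; exact absurd rfl h
  · intro u v; positivity
  · intro v _ h1
    have : dft G hlf (0 : V → V → ℤ) v = 0 := by simp [dft]
    rw [this]; omega
  · intro v _ _
    have : dft G hlf (0 : V → V → ℤ) v = 0 := by simp [dft]
    rw [this]; omega

end
end SparseFlowAux

/-- Every locally finite simple graph `G` with a `k`-sparse distribution `δ` has a
`δ`-flow that is edge-bounded by `k`. -/
theorem locally_finite_sparse_distribution_has_flow {V : Type*} (G : SimpleGraph V)
    (k : ℕ) (δ : V → ℕ)
    (hlf : ∀ v : V, (G.neighborSet v).Finite)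
    (hsparse : ∀ Z : Finset V,
      (∑ v ∈ Z, (δ v : ℕ∞)) ≤ (Z.card : ℕ∞) +
        (k : ℕ∞) * {p : V × V | G.Adj p.1 p.2 ∧ p.1 ∉ Z ∧ p.2 ∈ Z}.encard) :
    ∃ f : V → V → ℤ,
      (∀ u v : V, f u v = -f v u) ∧
      (∀ u v : V, f u v ≠ 0 → G.Adj u v) ∧
      (∀ v : V, {u : V | f v u ≠ 0}.Finite) ∧
      (∀ v : V, (∑ᶠ u : V, f v u) = (δ v : ℤ) - 1 ∨
        (δ v = 0 ∧ (∑ᶠ u : V, f v u) = 0)) ∧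
      ∀ u v : V, |f u v| ≤ (k : ℤ) := by
  classical
  have hsp := SparseFlowAux.sparse_nat G hlf k δ hsparse
  have hfin := fun W : Finset V => SparseFlowAux.finite_stage G hlf k W δ hsp
  choose g hg1 hg2 using hfin
  -- the ultrafilter extending the `atTop` filter of finite vertex sets
  let U : Ultrafilter (Finset V) := Ultrafilter.of Filter.atTop
  have hU_atTop : ∀ {s : Set (Finset V)}, s ∈ (Filter.atTop : Filter (Finset V)) → s ∈ U :=
    fun {s} hs => Ultrafilter.of_le Filter.atTop hs
  have habs : ∀ (W : Finset V) (u v : V), |g W u v| ≤ (k : ℤ) := by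
    intro W u v
    rw [abs_le]
    refine ⟨?_, (hg1 W).bdd u v⟩
    have := (hg1 W).bdd v u
    have hsk := (hg1 W).skew u v
    omega
  have key : ∀ u v : V, ∃ z : ℤ, |z| ≤ (k:ℤ) ∧ {W : Finset V | g W u v = z} ∈ U := by
    intro u v
    by_contra h
    push_neg at h
    have hc : ∀ z ∈ Finset.Icc (-(k:ℤ)) k, {W : Finset V | g W u v = z}ᶜ ∈ U := by
      intro z hz
      exact Ultrafilter.compl_mem_iff_notMem.2 (h z (abs_le.2 (Finset.mem_Icc.1 hz)))
    have hint : (⋂ z ∈ Finset.Icc (-(k:ℤ)) k, {W : Finset V | g W u v = z}ᶜ) ∈ U :=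
      (Filter.biInter_finset_mem _).2 hc
    obtain ⟨W, hW⟩ := Ultrafilter.nonempty_of_mem hint
    simp only [Set.mem_iInter, Set.mem_compl_iff, Set.mem_setOf_eq] at hW
    exact hW (g W u v) (Finset.mem_Icc.2 (abs_le.1 (habs W u v))) rfl
  choose f hf1 hf2 using key
  have hagree : ∀ (u v : V), {W : Finset V | g W u v = f u v} ∈ U := hf2
  refine ⟨f, ?_, ?_, ?_, ?_, fun u v => hf1 u v⟩
  · -- skew
    intro u v
    obtain ⟨W, hW⟩ := Ultrafilter.nonempty_of_mem
      (Filter.inter_mem (hagree u v) (hagree v u) : _ ∈ (U : Filter (Finset V)))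
    obtain ⟨h1, h2⟩ := hW
    rw [← h1, ← h2]
    exact (hg1 W).skew u v
  · -- adjacency support
    intro u v hne
    obtain ⟨W, hW⟩ := Ultrafilter.nonempty_of_mem (hagree u v)
    exact (hg1 W).adj u v (by rw [hW]; exact hne)
  · -- local finiteness of support
    intro v
    refine (hlf v).subset ?_
    intro u hu
    obtain ⟨W, hW⟩ := Ultrafilter.nonempty_of_mem (hagree v u)
    exact ((hg1 W).adj v u (by rw [hW]; exact hu) : G.Adj v u)
  · -- defects
    intro v
    have hA : (⋂ u ∈ (hlf v).toFinset, {W : Finset V | g W v u = f v u}) ∈ U :=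
      (Filter.biInter_finset_mem _).2 fun u _ => hagree v u
    have hB : {W : Finset V | {v} ≤ W} ∈ U := hU_atTop (Filter.mem_atTop {v})
    obtain ⟨W, hWA, hWB⟩ := Ultrafilter.nonempty_of_mem
      (Filter.inter_mem hA hB : _ ∈ (U : Filter (Finset V)))
    simp only [Set.mem_iInter, Set.mem_setOf_eq] at hWA
    have hvW : v ∈ W := hWB (Finset.mem_singleton_self v)
    have hsupp : (Function.support fun u => f v u) ⊆ ↑((hlf v).toFinset) := by
      intro u hu
      rw [Set.Finite.coe_toFinset]
      obtain ⟨W', hW'⟩ := Ultrafilter.nonempty_of_mem (hagree v u)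
      exact ((hg1 W').adj v u (by rw [hW']; exact hu) : G.Adj v u)
    have hfs : (∑ᶠ u : V, f v u) = ∑ u ∈ (hlf v).toFinset, f v u :=
      finsum_eq_sum_of_support_subset _ hsupp
    have hfd : (∑ᶠ u : V, f v u) = SparseFlowAux.dft G hlf (g W) v := by
      rw [hfs, SparseFlowAux.dft]
      exact Finset.sum_congr rfl fun u hu => (hWA u hu).symm
    rw [hfd]
    exact hg2 W v hvW
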